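/- Let n ≥ 4, t ∈ {n−1, n}, and let λ = (λ_1 > ⋯ > λ_ℓ > 0) be a strict partition with λ_1 ≤ n−1, with residues on its shifted diagram given by the type D_n spin convention. Decompose λ into consecutive groups of two rows: R_k consists of rows 2k−1 and 2k (or only row 2k−1 if ℓ = 2k−1 is the last row). Then the weight wt(R_k) := Σ_{(i,j)∈R_k} α_{res(i,j)} equals e_{n−λ_{2k−1}} + e_{n−λ_{2k}} when R_k consists of two rows, and equals e_{n−λ_{2k−1}} + e_n if t = n, respectively e_{n−λ_{2k−1}} − e_n if t = n−1, when R_k consists of a single row. In particular, each wt(R_k) is a positive root of type D_n. -/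
import Mathlib


namespace Stmt11

/-- Standard basis vector `e_k` (1-indexed) of `ℚ^n`. -/
def E (n k : ℕ) : Fin n → ℚ := fun x => if (x : ℕ) + 1 = k then 1 else 0

/-- Type `D_n` simple roots: `α_k = e_k - e_{k+1}` for `1 ≤ k ≤ n-1`
and `α_n = e_{n-1} + e_n`. -/
def alpha (n k : ℕ) : Fin n → ℚ :=
  if k = n then E n (n - 1) + E n n else E n k - E n (k + 1)

/-- The weight of row `i` of the shifted Young diagram of the strict partition `l`
(with `l i ≥ 1`), under the type `D_n` spin residue convention: the diagonal box
`(i,i)` has residue `t` if `i` is odd and `t'` if `i` is even, and the box `(i, i+k)`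
(`1 ≤ k ≤ λ_i - 1`) has residue `n + i - (i+k) - 1 = n - 1 - k`. -/
def rowWt (n t t' : ℕ) (l : ℕ → ℕ) (i : ℕ) : Fin n → ℚ :=
  alpha n (if i % 2 = 1 then t else t') +
    ∑ k ∈ Finset.Icc 1 (l i - 1), alpha n (n - 1 - k)

lemma sum_telescope (n : ℕ) (hn : 4 ≤ n) (m : ℕ) (hm : 1 ≤ m) (hmn : m ≤ n - 1) :
    ∑ k ∈ Finset.Icc 1 (m - 1), alpha n (n - 1 - k) = E n (n - m) - E n (n - 1) := by
  induction m, hm using Nat.le_induction with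
  | base => simp
  | succ m hm ih =>
    have hmn' : m ≤ n - 1 := by omega
    have hins : Finset.Icc 1 (m + 1 - 1) = insert m (Finset.Icc 1 (m - 1)) := by
      ext x; simp [Finset.mem_Icc, Finset.mem_insert]; omega
    rw [hins, Finset.sum_insert (by simp [Finset.mem_Icc]; omega), ih hmn']
    have h1 : alpha n (n - 1 - m) = E n (n - 1 - m) - E n (n - m) := by
      rw [alpha, if_neg (by omega), show n - 1 - m + 1 = n - m from by omega]
    rw [h1]
    have h2 : n - (m + 1) = n - 1 - m := by omega
    rw [h2]
    abel

lemma rowWt_top (n t t' : ℕ) (hn : 4 ≤ n) (l : ℕ → ℕ) (i : ℕ)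
    (h1 : 1 ≤ l i) (h2 : l i ≤ n - 1) (h : (if i % 2 = 1 then t else t') = n) :
    rowWt n t t' l i = E n (n - l i) + E n n := by
  rw [rowWt, h, sum_telescope n hn (l i) h1 h2, alpha, if_pos rfl]
  abel

lemma rowWt_bot (n t t' : ℕ) (hn : 4 ≤ n) (l : ℕ → ℕ) (i : ℕ)
    (h1 : 1 ≤ l i) (h2 : l i ≤ n - 1) (h : (if i % 2 = 1 then t else t') = n - 1) :
    rowWt n t t' l i = E n (n - l i) - E n n := by
  rw [rowWt, h, sum_telescope n hn (l i) h1 h2, alpha, if_neg (by omega)]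
  have h3 : n - 1 + 1 = n := by omega
  rw [h3]
  abel

theorem stmt11 (n t t' : ℕ) (hn : 4 ≤ n)
    (htt' : (t = n ∧ t' = n - 1) ∨ (t = n - 1 ∧ t' = n))
    (l : ℕ → ℕ)
    (hstrict : ∀ i j, 1 ≤ i → i < j → 0 < l j → l j < l i)
    (hbd : l 1 ≤ n - 1)
    (k : ℕ) (hk : 1 ≤ k) (hpos : 0 < l (2 * k - 1)) :
    (0 < l (2 * k) →
      rowWt n t t' l (2 * k - 1) + rowWt n t t' l (2 * k)
          = E n (n - l (2 * k - 1)) + E n (n - l (2 * k)) ∧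
      ∃ a b, 1 ≤ a ∧ a < b ∧ b ≤ n ∧
        rowWt n t t' l (2 * k - 1) + rowWt n t t' l (2 * k) = E n a + E n b) ∧
    (l (2 * k) = 0 →
      (t = n → rowWt n t t' l (2 * k - 1) = E n (n - l (2 * k - 1)) + E n n) ∧
      (t = n - 1 → rowWt n t t' l (2 * k - 1) = E n (n - l (2 * k - 1)) - E n n) ∧
      ∃ a b, 1 ≤ a ∧ a < b ∧ b ≤ n ∧
        (rowWt n t t' l (2 * k - 1) = E n a + E n b ∨
          rowWt n t t' l (2 * k - 1) = E n a - E n b)) := by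
  have hodd : (2 * k - 1) % 2 = 1 := by omega
  have heven : (2 * k) % 2 ≠ 1 := by omega
  have hm1n : l (2 * k - 1) ≤ n - 1 := by
    rcases eq_or_lt_of_le (show 1 ≤ 2 * k - 1 by omega) with h | h
    · rw [← h]; exact hbd
    · have := hstrict 1 (2 * k - 1) le_rfl h hpos; omega
  have hrt : (if (2 * k - 1) % 2 = 1 then t else t') = t := if_pos hodd
  have hrt' : (if (2 * k) % 2 = 1 then t else t') = t' := if_neg heven
  constructor
  · intro hpos2
    have hm21 : l (2 * k) < l (2 * k - 1) :=
      hstrict (2 * k - 1) (2 * k) (by omega) (by omega) hpos2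
    have hm2n : l (2 * k) ≤ n - 1 := by omega
    have key : rowWt n t t' l (2 * k - 1) + rowWt n t t' l (2 * k)
        = E n (n - l (2 * k - 1)) + E n (n - l (2 * k)) := by
      rcases htt' with ⟨ht, ht'⟩ | ⟨ht, ht'⟩
      · rw [rowWt_top n t t' hn l _ hpos hm1n (hrt.trans ht),
          rowWt_bot n t t' hn l _ hpos2 hm2n (hrt'.trans ht')]
        abel
      · rw [rowWt_bot n t t' hn l _ hpos hm1n (hrt.trans ht),
          rowWt_top n t t' hn l _ hpos2 hm2n (hrt'.trans ht')]
        abel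
    exact ⟨key, n - l (2 * k - 1), n - l (2 * k), by omega, by omega, by omega, key⟩
  · intro _
    rcases htt' with ⟨ht, ht'⟩ | ⟨ht, ht'⟩
    · refine ⟨fun _ => rowWt_top n t t' hn l _ hpos hm1n (hrt.trans ht),
        fun h => absurd (ht.symm.trans h) (by omega),
        n - l (2 * k - 1), n, by omega, by omega, le_rfl,
        Or.inl (rowWt_top n t t' hn l _ hpos hm1n (hrt.trans ht))⟩
    · refine ⟨fun h => absurd (ht.symm.trans h) (by omega),
        fun _ => rowWt_bot n t t' hn l _ hpos hm1n (hrt.trans ht),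
        n - l (2 * k - 1), n, by omega, by omega, le_rfl,
        Or.inr (rowWt_bot n t t' hn l _ hpos hm1n (hrt.trans ht))⟩

end Stmt11
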